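/- The functors T and T⁻¹ between diads and triads are mutually inverse equivalences: for every diad D•, T⁻¹(T(D•)) is naturally isomorphic to D•, and for every triad S, T(T⁻¹(S)) is naturally isomorphic to S. -/

import Mathlib

open CategoryTheory CategoryTheory.Limits

noncomputable section

variable {C : Type*} [Category C] [Abelian C] {FL A B FR : C}
  (aL : FL ⟶ A) (bL : FL ⟶ B) (aR : A ⟶ FR) (bR : B ⟶ FR)

/-- The first map `L = (a_L, b_L) : F_L ⟶ A ⊞ B` of a diad. -/
abbrev diadL : FL ⟶ A ⊞ B := biprod.lift aL bL

/-- The second map `R = (a_R, b_R) : A ⊞ B ⟶ F_R` of a diad. -/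
abbrev diadR : A ⊞ B ⟶ FR := biprod.desc aR bR

/-- The middle cohomology `H(D•) = ker R / im L` of a diad. -/
def diadH (w : diadL aL bL ≫ diadR aR bR = 0) : C :=
  cokernel (kernel.lift (diadR aR bR) (diadL aL bL) w)

/-- The projection `h : ker R ⟶ H(D•)`. -/
def diadh (w : diadL aL bL ≫ diadR aR bR = 0) :
    kernel (diadR aR bR) ⟶ diadH aL bL aR bR w :=
  cokernel.π _

/-- The induced map `k : H(D•) ⟶ coker L`. -/
def diadk (w : diadL aL bL ≫ diadR aR bR = 0) :
    diadH aL bL aR bR w ⟶ cokernel (diadL aL bL) :=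
  cokernel.desc _ (kernel.ι (diadR aR bR) ≫ cokernel.π (diadL aL bL))
    (by rw [← Category.assoc, kernel.lift_ι, cokernel.condition])

end

namespace Stmt17Aux

variable {C : Type*} [Category C] [Abelian C]

lemma exists_iso_ker_coker {X Y : C} (m : X ⟶ Y) [Mono m] :
    ∃ e : X ≅ kernel (cokernel.π m), e.hom ≫ kernel.ι (cokernel.π m) = m := by
  have h := Abelian.monoIsKernelOfCokernel _ (cokernelIsCokernel m)
  refine ⟨h.conePointUniqueUpToIso (limit.isLimit _), ?_⟩
  exact h.conePointUniqueUpToIso_hom_comp (limit.isLimit _) WalkingParallelPair.zero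

lemma exists_iso_coker_ker {X Y : C} (f : X ⟶ Y) [Epi f] :
    ∃ e : cokernel (kernel.ι f) ≅ Y, cokernel.π (kernel.ι f) ≫ e.hom = f := by
  have h := Abelian.epiIsCokernelOfKernel _ (kernelIsKernel f)
  refine ⟨(colimit.isColimit _).coconePointUniqueUpToIso h, ?_⟩
  exact (colimit.isColimit _).comp_coconePointUniqueUpToIso_hom h
    WalkingParallelPair.one

lemma exists_iso_cokernel {X Y Z : C} (f : X ⟶ Y) (g : Y ⟶ Z) (w : f ≫ g = 0)
    (hex : (ShortComplex.mk f g w).Exact) [Epi g] :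
    ∃ e : cokernel f ≅ Z, cokernel.π f ≫ e.hom = g := by
  have : Epi (ShortComplex.mk f g w).g := ‹Epi g›
  have h := hex.gIsCokernel
  refine ⟨(colimit.isColimit _).coconePointUniqueUpToIso h, ?_⟩
  simpa using (colimit.isColimit _).comp_coconePointUniqueUpToIso_hom h
    WalkingParallelPair.one

variable {Fm A B1 B2 Fp : C} (cm : Fm ⟶ A) (dm1 : Fm ⟶ B1) (dm2 : Fm ⟶ B2)
  (cp : A ⟶ Fp) (dp1 : B1 ⟶ Fp) (dp2 : B2 ⟶ Fp)
  (w : biprod.lift cm (biprod.lift dm1 dm2) ≫ biprod.desc cp (biprod.desc dp1 dp2) = 0)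

lemma epi_dm2 (hS : (ShortComplex.mk _ _ w).ShortExact) (h3 : Epi (biprod.desc cp dp1)) :
    Epi dm2 := by
  have hw : biprod.lift cm (biprod.lift dm1 dm2) ≫
      (biprod.desc 0 (biprod.desc 0 (cokernel.π dm2)) : A ⊞ (B1 ⊞ B2) ⟶ cokernel dm2) = 0 := by
    simp [biprod.lift_desc, cokernel.condition]
  obtain ⟨ψ, hψ⟩ := CokernelCofork.IsColimit.desc' hS.gIsCokernel _ hw
  have hψ' : biprod.desc cp (biprod.desc dp1 dp2) ≫ ψ =
      biprod.desc 0 (biprod.desc 0 (cokernel.π dm2)) := hψ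
  have h1 : cp ≫ ψ = 0 := by simpa using biprod.inl ≫= hψ'
  have h2 : dp1 ≫ ψ = 0 := by
    have := biprod.inl ≫= (biprod.inr ≫= hψ')
    simpa using this
  have hψ0 : ψ = 0 := by
    rw [← cancel_epi (biprod.desc cp dp1)]
    apply biprod.hom_ext' <;> simp [h1, h2]
  have hq0 : cokernel.π dm2 = 0 := by
    have := biprod.inr ≫= (biprod.inr ≫= hψ')
    simpa [hψ0] using this.symm
  refine Preadditive.epi_of_cancel_zero _ (fun {R} u hu => ?_)
  rw [← cokernel.π_desc dm2 u hu, hq0, zero_comp]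

attribute [local instance] CategoryTheory.Abelian.Pseudoelement.objectToSort
  CategoryTheory.Abelian.Pseudoelement.homToFun

open CategoryTheory.Abelian

lemma exact_aux (hS : (ShortComplex.mk _ _ w).ShortExact)
    (wL : biprod.lift (kernel.ι dm2 ≫ cm) (kernel.ι dm2 ≫ dm1) ≫ biprod.desc cp dp1 = 0) :
    (ShortComplex.mk _ _ wL).Exact := by
  apply Pseudoelement.exact_of_pseudo_exact
  intro b hb
  set Sf := biprod.lift cm (biprod.lift dm1 dm2) with hSf
  set Sg := biprod.desc cp (biprod.desc dp1 dp2) with hSg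
  set incl : (A ⊞ B1 : C) ⟶ A ⊞ (B1 ⊞ B2) := biprod.map (𝟙 A) biprod.inl with hincl
  set proj : (A ⊞ (B1 ⊞ B2) : C) ⟶ A ⊞ B1 :=
    biprod.lift biprod.fst (biprod.snd ≫ biprod.fst) with hproj
  have k1 : incl ≫ Sg = biprod.desc cp dp1 := by
    apply biprod.hom_ext' <;> simp [hincl, hSg]
  have k2 : incl ≫ (biprod.snd ≫ biprod.snd : (A ⊞ (B1 ⊞ B2) : C) ⟶ B2) = 0 := by
    simp [hincl]
  have k3 : incl ≫ proj = 𝟙 _ := by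
    apply biprod.hom_ext <;> simp [hincl, hproj]
  have k4 : Sf ≫ proj = biprod.lift cm dm1 := by
    apply biprod.hom_ext <;> simp [hSf, hproj]
  have k5 : Sf ≫ (biprod.snd ≫ biprod.snd : (A ⊞ (B1 ⊞ B2) : C) ⟶ B2) = dm2 := by
    simp [hSf]
  have eqL : biprod.lift (kernel.ι dm2 ≫ cm) (kernel.ι dm2 ≫ dm1) =
      kernel.ι dm2 ≫ biprod.lift cm dm1 := by
    apply biprod.hom_ext <;> simp
  have idap : ∀ (a : (A ⊞ B1 : C)), (𝟙 (A ⊞ B1 : C)) a = a := by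
    intro a
    obtain ⟨x, rfl⟩ := Quotient.exists_rep a
    rw [Pseudoelement.pseudoApply_mk']
    apply Quotient.sound
    exact ⟨_, 𝟙 _, 𝟙 _, inferInstance, inferInstance, by simp⟩
  have h1 : Sg (incl b) = 0 := by
    rw [← Pseudoelement.comp_apply, k1]
    exact hb
  obtain ⟨f, hf⟩ := Pseudoelement.pseudo_exact_of_exact hS.exact (incl b) h1
  have h2 : dm2 f = 0 := by
    rw [← k5, Pseudoelement.comp_apply, hf, ← Pseudoelement.comp_apply, k2,
      Pseudoelement.zero_apply]
  have hker : (ShortComplex.mk (kernel.ι dm2) dm2 (kernel.condition dm2)).Exact :=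
    ShortComplex.exact_of_f_is_kernel _ (kernelIsKernel dm2)
  obtain ⟨x, hx⟩ := Pseudoelement.pseudo_exact_of_exact hker f h2
  refine ⟨x, ?_⟩
  show (biprod.lift (kernel.ι dm2 ≫ cm) (kernel.ι dm2 ≫ dm1)) x = b
  rw [eqL, Pseudoelement.comp_apply, hx, ← k4, Pseudoelement.comp_apply, hf,
    ← Pseudoelement.comp_apply, k3, idap]

end Stmt17Aux

open CategoryTheory CategoryTheory.Limits in
/-- `T` and `T⁻¹` are mutually inverse equivalences between diads and triads:
(1) for every diad `D•`, the diad `T⁻¹(T(D•))` is isomorphic to `D•` (by isomorphisms on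
the outer terms compatible with the structure maps, the identity on `A` and `B`);
(2) for every triad `S`, the triad `T(T⁻¹(S))` is isomorphic to `S` (by isomorphisms on
`F₋`, `B²` and `F₊` compatible with all the structure maps). -/
theorem stmt17 {C : Type*} [Category C] [Abelian C] :
    (∀ (FL A B FR : C) (aL : FL ⟶ A) (bL : FL ⟶ B) (aR : A ⟶ FR) (bR : B ⟶ FR)
      (w : diadL aL bL ≫ diadR aR bR = 0), Mono aL → Epi aR →
      ∃ (eL : FL ≅ kernel (diadh aL bL aR bR w))
        (eR : cokernel ((kernel.ι (diadR aR bR) : _ ⟶ A ⊞ B)) ≅ FR),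
        eL.hom ≫ kernel.ι (diadh aL bL aR bR w) ≫ kernel.ι (diadR aR bR) =
          diadL aL bL ∧
        cokernel.π ((kernel.ι (diadR aR bR) : _ ⟶ A ⊞ B)) ≫ eR.hom = diadR aR bR) ∧
    (∀ (Fm A B1 B2 Fp : C) (cm : Fm ⟶ A) (dm1 : Fm ⟶ B1) (dm2 : Fm ⟶ B2)
      (cp : A ⟶ Fp) (dp1 : B1 ⟶ Fp) (dp2 : B2 ⟶ Fp)
      (w : biprod.lift cm (biprod.lift dm1 dm2) ≫ biprod.desc cp (biprod.desc dp1 dp2) = 0),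
      (ShortComplex.mk _ _ w).ShortExact →
      Mono (biprod.lift cm dm1) → Mono (biprod.lift cm dm2) →
      Epi (biprod.desc cp dp1) → Epi (biprod.desc cp dp2) →
      ∃ (w' : diadL (kernel.ι dm2 ≫ cm) (kernel.ι dm2 ≫ dm1) ≫
                diadR (biprod.inl ≫ cokernel.π (biprod.lift cm dm1))
                      (biprod.inr ≫ cokernel.π (biprod.lift cm dm1)) = 0)
        (em : Fm ≅ kernel (diadR (biprod.inl ≫ cokernel.π (biprod.lift cm dm1))
                      (biprod.inr ≫ cokernel.π (biprod.lift cm dm1))))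
        (e2 : diadH (kernel.ι dm2 ≫ cm) (kernel.ι dm2 ≫ dm1)
                (biprod.inl ≫ cokernel.π (biprod.lift cm dm1))
                (biprod.inr ≫ cokernel.π (biprod.lift cm dm1)) w' ≅ B2)
        (ep : cokernel (diadL (kernel.ι dm2 ≫ cm) (kernel.ι dm2 ≫ dm1)) ≅ Fp),
        em.hom ≫ kernel.ι _ = biprod.lift cm dm1 ∧
        dm2 = em.hom ≫ diadh (kernel.ι dm2 ≫ cm) (kernel.ι dm2 ≫ dm1)
                (biprod.inl ≫ cokernel.π (biprod.lift cm dm1))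
                (biprod.inr ≫ cokernel.π (biprod.lift cm dm1)) w' ≫ e2.hom ∧
        cokernel.π (diadL (kernel.ι dm2 ≫ cm) (kernel.ι dm2 ≫ dm1)) ≫ ep.hom =
          biprod.desc cp dp1 ∧
        (-(diadk (kernel.ι dm2 ≫ cm) (kernel.ι dm2 ≫ dm1)
                (biprod.inl ≫ cokernel.π (biprod.lift cm dm1))
                (biprod.inr ≫ cokernel.π (biprod.lift cm dm1)) w')) ≫ ep.hom =
          e2.hom ≫ dp2) := by
  constructor
  · intro FL A B FR aL bL aR bR w hmL heR
    haveI := hmL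
    haveI := heR
    haveI : Mono (diadL aL bL) := mono_of_mono_fac (biprod.lift_fst aL bL)
    haveI : Epi (diadR aR bR) := epi_of_epi_fac (biprod.inl_desc aR bR)
    haveI : Mono (kernel.lift (diadR aR bR) (diadL aL bL) w) :=
      mono_of_mono_fac (kernel.lift_ι _ _ _)
    obtain ⟨eL, heL⟩ :=
      Stmt17Aux.exists_iso_ker_coker (kernel.lift (diadR aR bR) (diadL aL bL) w)
    obtain ⟨eR, heR'⟩ := Stmt17Aux.exists_iso_coker_ker (diadR aR bR)
    refine ⟨eL, eR, ?_, heR'⟩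
    show eL.hom ≫ kernel.ι (cokernel.π (kernel.lift (diadR aR bR) (diadL aL bL) w)) ≫
        kernel.ι (diadR aR bR) = diadL aL bL
    rw [← Category.assoc, heL, kernel.lift_ι]
  · intro Fm A B1 B2 Fp cm dm1 dm2 cp dp1 dp2 w hS h1 h2 h3 h4
    haveI := h1
    haveI := h3
    have eqR : biprod.desc (biprod.inl ≫ cokernel.π (biprod.lift cm dm1))
        (biprod.inr ≫ cokernel.π (biprod.lift cm dm1)) = cokernel.π (biprod.lift cm dm1) := by
      apply biprod.hom_ext' <;> simp
    have eqL : biprod.lift (kernel.ι dm2 ≫ cm) (kernel.ι dm2 ≫ dm1) =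
        kernel.ι dm2 ≫ biprod.lift cm dm1 := by
      apply biprod.hom_ext <;> simp
    have w' : diadL (kernel.ι dm2 ≫ cm) (kernel.ι dm2 ≫ dm1) ≫
        diadR (biprod.inl ≫ cokernel.π (biprod.lift cm dm1))
          (biprod.inr ≫ cokernel.π (biprod.lift cm dm1)) = 0 := by
      rw [show diadL (kernel.ι dm2 ≫ cm) (kernel.ι dm2 ≫ dm1) =
          kernel.ι dm2 ≫ biprod.lift cm dm1 from eqL,
        show diadR (biprod.inl ≫ cokernel.π (biprod.lift cm dm1))
          (biprod.inr ≫ cokernel.π (biprod.lift cm dm1)) =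
          cokernel.π (biprod.lift cm dm1) from eqR,
        Category.assoc, cokernel.condition, comp_zero]
    obtain ⟨em0, hem0⟩ := Stmt17Aux.exists_iso_ker_coker (biprod.lift cm dm1)
    set em : Fm ≅ kernel (diadR (biprod.inl ≫ cokernel.π (biprod.lift cm dm1))
        (biprod.inr ≫ cokernel.π (biprod.lift cm dm1))) :=
      em0 ≪≫ (kernelIsoOfEq eqR).symm with hem_def
    have hem : em.hom ≫ kernel.ι (diadR (biprod.inl ≫ cokernel.π (biprod.lift cm dm1))
        (biprod.inr ≫ cokernel.π (biprod.lift cm dm1))) = biprod.lift cm dm1 := by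
      rw [hem_def]
      simp only [Iso.trans_hom, Iso.symm_hom, Category.assoc, kernelIsoOfEq_inv_comp_ι]
      exact hem0
    have hlift : kernel.lift (diadR (biprod.inl ≫ cokernel.π (biprod.lift cm dm1))
          (biprod.inr ≫ cokernel.π (biprod.lift cm dm1)))
          (diadL (kernel.ι dm2 ≫ cm) (kernel.ι dm2 ≫ dm1)) w' =
        kernel.ι dm2 ≫ em.hom := by
      rw [← cancel_mono (kernel.ι (diadR (biprod.inl ≫ cokernel.π (biprod.lift cm dm1))
        (biprod.inr ≫ cokernel.π (biprod.lift cm dm1)))), kernel.lift_ι,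
        Category.assoc, hem]
      exact eqL
    -- e2
    have cond1 : kernel.lift (diadR (biprod.inl ≫ cokernel.π (biprod.lift cm dm1))
          (biprod.inr ≫ cokernel.π (biprod.lift cm dm1)))
          (diadL (kernel.ι dm2 ≫ cm) (kernel.ι dm2 ≫ dm1)) w' ≫ (em.inv ≫ dm2) = 0 := by
      rw [hlift, Category.assoc, Iso.hom_inv_id_assoc, kernel.condition]
    haveI hepi2 : Epi dm2 := Stmt17Aux.epi_dm2 cm dm1 dm2 cp dp1 dp2 w hS h3
    have hker : (ShortComplex.mk (kernel.ι dm2) dm2 (kernel.condition dm2)).Exact :=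
      ShortComplex.exact_of_f_is_kernel _ (kernelIsKernel dm2)
    haveI : Epi (ShortComplex.mk (kernel.ι dm2) dm2 (kernel.condition dm2)).g := hepi2
    have hdm2colim := hker.gIsCokernel
    have cond2 : kernel.ι dm2 ≫ em.hom ≫
        cokernel.π (kernel.lift (diadR (biprod.inl ≫ cokernel.π (biprod.lift cm dm1))
          (biprod.inr ≫ cokernel.π (biprod.lift cm dm1)))
          (diadL (kernel.ι dm2 ≫ cm) (kernel.ι dm2 ≫ dm1)) w') = 0 := by
      rw [← Category.assoc, ← hlift, cokernel.condition]
    obtain ⟨e2inv, he2inv0⟩ : ∃ e2inv : B2 ⟶ cokernel (kernel.lift (diadR (biprod.inl ≫ cokernel.π (biprod.lift cm dm1))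
            (biprod.inr ≫ cokernel.π (biprod.lift cm dm1)))
            (diadL (kernel.ι dm2 ≫ cm) (kernel.ι dm2 ≫ dm1)) w'), dm2 ≫ e2inv = em.hom ≫
          cokernel.π (kernel.lift (diadR (biprod.inl ≫ cokernel.π (biprod.lift cm dm1))
            (biprod.inr ≫ cokernel.π (biprod.lift cm dm1)))
            (diadL (kernel.ι dm2 ≫ cm) (kernel.ι dm2 ≫ dm1)) w') :=
      ⟨_, (CokernelCofork.IsColimit.desc' hdm2colim _ cond2).2⟩
    have he2inv : dm2 ≫ e2inv = em.hom ≫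
        cokernel.π (kernel.lift (diadR (biprod.inl ≫ cokernel.π (biprod.lift cm dm1))
          (biprod.inr ≫ cokernel.π (biprod.lift cm dm1)))
          (diadL (kernel.ι dm2 ≫ cm) (kernel.ι dm2 ≫ dm1)) w') := he2inv0
    set e2 : diadH (kernel.ι dm2 ≫ cm) (kernel.ι dm2 ≫ dm1)
        (biprod.inl ≫ cokernel.π (biprod.lift cm dm1))
        (biprod.inr ≫ cokernel.π (biprod.lift cm dm1)) w' ≅ B2 :=
      { hom := cokernel.desc _ (em.inv ≫ dm2) cond1
        inv := e2inv
        hom_inv_id := by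
          apply coequalizer.hom_ext
          show cokernel.π _ ≫ cokernel.desc _ (em.inv ≫ dm2) cond1 ≫ e2inv = cokernel.π _ ≫ 𝟙 _
          rw [cokernel.π_desc_assoc, Category.assoc, he2inv, Iso.inv_hom_id_assoc,
            Category.comp_id]
        inv_hom_id := by
          unfold diadH
          rw [← cancel_epi dm2, ← Category.assoc, he2inv, Category.assoc,
            cokernel.π_desc, Iso.hom_inv_id_assoc, Category.comp_id] } with he2_def
    have hπe2 : cokernel.π _ ≫ e2.hom = em.inv ≫ dm2 := cokernel.π_desc _ _ _
    -- ep
    have wsum : cm ≫ cp + dm1 ≫ dp1 + dm2 ≫ dp2 = 0 := by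
      rw [add_assoc]
      simpa [biprod.lift_desc] using w
    have h5 : biprod.lift cm dm1 ≫ biprod.desc cp dp1 = -(dm2 ≫ dp2) := by
      rw [biprod.lift_desc]
      exact eq_neg_of_add_eq_zero_left wsum
    have w2 : diadL (kernel.ι dm2 ≫ cm) (kernel.ι dm2 ≫ dm1) ≫ biprod.desc cp dp1 = 0 := by
      rw [show diadL (kernel.ι dm2 ≫ cm) (kernel.ι dm2 ≫ dm1) =
          kernel.ι dm2 ≫ biprod.lift cm dm1 from eqL, Category.assoc, h5,
        Preadditive.comp_neg, ← Category.assoc, kernel.condition, zero_comp, neg_zero]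
    have hex2 := Stmt17Aux.exact_aux cm dm1 dm2 cp dp1 dp2 w hS w2
    obtain ⟨ep, hep⟩ := Stmt17Aux.exists_iso_cokernel _ _ w2 hex2
    have key : -(kernel.ι (diadR (biprod.inl ≫ cokernel.π (biprod.lift cm dm1))
          (biprod.inr ≫ cokernel.π (biprod.lift cm dm1))) ≫ biprod.desc cp dp1) =
        em.inv ≫ dm2 ≫ dp2 := by
      rw [← cancel_epi em.hom, Iso.hom_inv_id_assoc, Preadditive.comp_neg,
        ← Category.assoc, hem, h5, neg_neg]
    refine ⟨w', em, e2, ep, hem, ?_, hep, ?_⟩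
    · show dm2 = em.hom ≫ cokernel.π _ ≫ e2.hom
      rw [hπe2, Iso.hom_inv_id_assoc]
    · apply coequalizer.hom_ext
      show cokernel.π _ ≫ _ = cokernel.π _ ≫ _
      rw [Preadditive.neg_comp]; erw [Preadditive.comp_neg]
      rw [show diadk (kernel.ι dm2 ≫ cm) (kernel.ι dm2 ≫ dm1)
          (biprod.inl ≫ cokernel.π (biprod.lift cm dm1))
          (biprod.inr ≫ cokernel.π (biprod.lift cm dm1)) w' =
          cokernel.desc _ (kernel.ι _ ≫ cokernel.π _) _ from rfl]
      unfold diadH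
      rw [cokernel.π_desc_assoc, Category.assoc, hep, ← Category.assoc, key,
        ← Category.assoc]
      rw [show cokernel.π _ ≫ e2.hom = em.inv ≫ dm2 from hπe2]
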